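/- Let a, b be points in the open unit disk, nonzero, non-collinear with 0, and with |a| ≠ |b|. Define c = (a − b + ab(conj(a)−conj(b)))/(|a|² − |b|²) and h(z) = (c·conj(z) − 1)/(conj(z) − conj(c)). Then h(a) = b and h maps the unit disk onto itself, i.e., |z| < 1 implies |h(z)| < 1. -/

import Mathlib

open Complex

lemma key1 (a b : ℂ) : Complex.normSq (a - b + a*b*(starRingEnd ℂ a - starRingEnd ℂ b)) =
    (Complex.normSq a - Complex.normSq b)^2 +
      (1 - Complex.normSq a)*(1 - Complex.normSq b)*Complex.normSq (a-b) := by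
  simp [Complex.normSq_apply, Complex.mul_re, Complex.mul_im]
  ring

lemma key2 (c z : ℂ) : Complex.normSq (starRingEnd ℂ z - starRingEnd ℂ c)
    - Complex.normSq (c * starRingEnd ℂ z - 1)
    = (Complex.normSq c - 1)*(1 - Complex.normSq z) := by
  simp [Complex.normSq_apply, Complex.mul_re, Complex.mul_im]
  ring

theorem inversion_maps_disk (a b : ℂ)
    (ha0 : a ≠ 0) (hb0 : b ≠ 0)
    (ha : ‖a‖ < 1) (hb : ‖b‖ < 1)
    (hne : ‖a‖ ≠ ‖b‖)
    (hnc : ¬ Collinear ℝ ({0, a, b} : Set ℂ)) :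
    let c := (a - b + a * b * (starRingEnd ℂ a - starRingEnd ℂ b)) /
      ((‖a‖ ^ 2 - ‖b‖ ^ 2 : ℝ) : ℂ)
    let h : ℂ → ℂ := fun z => (c * starRingEnd ℂ z - 1) / (starRingEnd ℂ z - starRingEnd ℂ c)
    h a = b ∧ ∀ z : ℂ, ‖z‖ < 1 → ‖h z‖ < 1 := by
  intro c h
  have hab : a ≠ b := fun e => hne (by rw [e])
  have hD : Complex.normSq a - Complex.normSq b ≠ 0 := by
    intro e
    apply hne
    have h1 : ‖a‖ ^ 2 = ‖b‖ ^ 2 := by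
      rw [Complex.sq_norm, Complex.sq_norm]; linarith
    nlinarith [norm_nonneg a, norm_nonneg b]
  have hDeq : (‖a‖ ^ 2 - ‖b‖ ^ 2 : ℝ)
      = Complex.normSq a - Complex.normSq b := by
    rw [Complex.sq_norm, Complex.sq_norm]
  have hDr : ((‖a‖ ^ 2 - ‖b‖ ^ 2 : ℝ) : ℂ) ≠ 0 := by
    simp only [ne_eq, Complex.ofReal_eq_zero]
    rw [hDeq]; exact hD
  have hpa : Complex.normSq a < 1 := by
    rw [← Complex.sq_norm]; nlinarith [norm_nonneg a]
  have hpb : Complex.normSq b < 1 := by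
    rw [← Complex.sq_norm]; nlinarith [norm_nonneg b]
  have habn : 0 < Complex.normSq (a - b) :=
    Complex.normSq_pos.mpr (sub_ne_zero_of_ne hab)
  have hnc1 : 1 < Complex.normSq c := by
    have hcval : Complex.normSq c
        = Complex.normSq (a - b + a*b*(starRingEnd ℂ a - starRingEnd ℂ b))
        / (Complex.normSq a - Complex.normSq b)^2 := by
      rw [show c = _ / _ from rfl, map_div₀, Complex.normSq_ofReal, hDeq]
      ring
    rw [hcval, key1, lt_div_iff₀ (by positivity)]
    nlinarith [mul_pos (mul_pos (by linarith : (0:ℝ) < 1 - Complex.normSq a)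
      (by linarith : (0:ℝ) < 1 - Complex.normSq b)) habn]
  have hc1 : 1 < ‖c‖ := by
    nlinarith [Complex.sq_norm c, norm_nonneg c]
  have hca : c ≠ a := fun e => by rw [e] at hc1; linarith
  constructor
  · -- h a = b
    have hden : starRingEnd ℂ a - starRingEnd ℂ c ≠ 0 := by
      intro e
      exact hca (((starRingEnd ℂ).injective (sub_eq_zero.mp e)).symm)
    show (c * starRingEnd ℂ a - 1) / (starRingEnd ℂ a - starRingEnd ℂ c) = b
    rw [div_eq_iff hden]
    have hc2 : ((‖a‖ ^ 2 - ‖b‖ ^ 2 : ℝ) : ℂ)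
        = a * starRingEnd ℂ a - b * starRingEnd ℂ b := by
      rw [hDeq, Complex.ofReal_sub, Complex.mul_conj, Complex.mul_conj]
    have hDr' : a * starRingEnd ℂ a - b * starRingEnd ℂ b ≠ 0 := by
      rw [← hc2]; exact hDr
    have hcval : c = (a - b + a * b * (starRingEnd ℂ a - starRingEnd ℂ b)) /
        (a * starRingEnd ℂ a - b * starRingEnd ℂ b) := by
      rw [show c = _ / _ from rfl, hc2]
    rw [hcval]
    have hconjD : starRingEnd ℂ (a * starRingEnd ℂ a - b * starRingEnd ℂ b)
        = a * starRingEnd ℂ a - b * starRingEnd ℂ b := by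
      simp only [map_sub, map_mul, Complex.conj_conj]; ring
    rw [map_div₀, hconjD]
    simp only [map_sub, map_add, map_mul, Complex.conj_conj]
    field_simp
    ring
  · intro z hz
    have hpz : Complex.normSq z < 1 := by
      rw [← Complex.sq_norm]; nlinarith [norm_nonneg z]
    have hdz : starRingEnd ℂ z - starRingEnd ℂ c ≠ 0 := by
      intro e
      have h2 : ‖starRingEnd ℂ z‖ = ‖starRingEnd ℂ c‖ := by
        rw [sub_eq_zero.mp e]
      rw [Complex.norm_conj, Complex.norm_conj] at h2
      linarith
    show ‖(c * starRingEnd ℂ z - 1) / (starRingEnd ℂ z - starRingEnd ℂ c)‖ < 1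
    rw [norm_div, div_lt_one (norm_pos_iff.mpr hdz)]
    have hk := key2 c z
    have h1 : Complex.normSq (c * starRingEnd ℂ z - 1)
        < Complex.normSq (starRingEnd ℂ z - starRingEnd ℂ c) := by nlinarith
    have := norm_nonneg (c * starRingEnd ℂ z - 1)
    have := norm_nonneg (starRingEnd ℂ z - starRingEnd ℂ c)
    nlinarith [Complex.sq_norm (c * starRingEnd ℂ z - 1),
      Complex.sq_norm (starRingEnd ℂ z - starRingEnd ℂ c)]
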